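/- arXiv:2206.03375 — 2 statements merged into one kernel-verified Lean document; each statement's English description precedes it below -/
import Mathlib

section
/- Let G be an r-regular graph with n vertices, m edges, and adjacency eigenvalues λ₁,...,λₙ. Then the multiset of eigenvalues of the adjacency matrix of T(G) is {-2 with multiplicity m - n} together with {λᵢ - 1 + r/2 ± sqrt(λᵢ + 1 + r²/4) : i = 1,...,n}, each with multiplicity 1 per index-sign pair (Cvetković's theorem). -/
open scoped Classical
open Matrix

/-- The incidence matrix of a simple graph `G`, with rows indexed by vertices and
columns indexed by edges: entry `(v, e)` is `1` if `v` is an endpoint of `e`, else `0`. -/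
noncomputable def incMat {V : Type*} (G : SimpleGraph V) : Matrix V G.edgeSet ℝ :=
  fun v e => if v ∈ (e : Sym2 V) then 1 else 0

/-- The total graph `T(G)` of a simple graph `G`: its vertices are the vertices and the
edges of `G`; two of them are adjacent iff the corresponding elements of `G` are
adjacent vertices, an incident vertex–edge pair, or edges sharing an endpoint. -/
def totalGraph {V : Type*} (G : SimpleGraph V) : SimpleGraph (V ⊕ G.edgeSet) where
  Adj x y :=
    match x, y with
    | Sum.inl u, Sum.inl v => G.Adj u v
    | Sum.inl u, Sum.inr e => u ∈ (e : Sym2 V)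
    | Sum.inr e, Sum.inl u => u ∈ (e : Sym2 V)
    | Sum.inr e, Sum.inr f => e ≠ f ∧ ∃ v, v ∈ (e : Sym2 V) ∧ v ∈ (f : Sym2 V)
  symm := by
    constructor
    rintro (u | e) (v | f) h
    · exact h.symm
    · exact h
    · exact h
    · obtain ⟨hne, v, hv1, hv2⟩ := h
      exact ⟨hne.symm, v, hv2, hv1⟩
  loopless := by
    constructor
    rintro (u | e) h
    · exact G.irrefl h
    · exact h.1 rfl

section aux
open Polynomial
variable {V : Type*} [Fintype V] [DecidableEq V] (G : SimpleGraph V)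

@[simp] lemma incMat_apply (u : V) (e : G.edgeSet) :
    incMat G u e = if u ∈ (e : Sym2 V) then 1 else 0 := by unfold incMat; congr

lemma sum_edgeSet (f : Sym2 V → ℝ) : ∑ e : G.edgeSet, f ↑e = ∑ e ∈ G.edgeFinset, f e :=
  (Finset.sum_subtype G.edgeFinset (fun x => G.mem_edgeFinset) f).symm

lemma eval_charpoly' {ι : Type*} [Fintype ι] [DecidableEq ι] (M : Matrix ι ι ℝ) (y : ℝ) :
    M.charpoly.eval y = det (y • (1 : Matrix ι ι ℝ) - M) := by
  rw [Matrix.charpoly, ← Polynomial.coe_evalRingHom, RingHom.map_det]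
  congr 1
  ext i j
  by_cases h : i = j
  · subst h; simp [charmatrix_apply, Matrix.one_apply]
  · simp [charmatrix_apply, Matrix.one_apply, h, Matrix.diagonal_apply_ne _ h]

lemma incMat_mul_transpose :
    incMat G * (incMat G)ᵀ
      = G.adjMatrix ℝ + Matrix.diagonal (fun v => (G.degree v : ℝ)) := by
  ext u v
  rw [Matrix.mul_apply]
  have : ∀ e : G.edgeSet, incMat G u e * (incMat G)ᵀ e v
      = (fun s : Sym2 V => (if u ∈ s then (1:ℝ) else 0) * (if v ∈ s then (1:ℝ) else 0)) ↑e := by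
    intro e; rw [Matrix.transpose_apply, incMat_apply, incMat_apply]
  rw [Finset.sum_congr rfl (fun e _ => this e),
    sum_edgeSet G (fun s : Sym2 V => (if u ∈ s then (1:ℝ) else 0) * (if v ∈ s then (1:ℝ) else 0))]
  by_cases huv : u = v
  · subst huv
    have h1 : ∀ s ∈ G.edgeFinset,
        (if u ∈ s then (1:ℝ) else 0) * (if u ∈ s then (1:ℝ) else 0)
          = if u ∈ s then (1:ℝ) else 0 := by
      intro s _; split_ifs <;> simp
    rw [Finset.sum_congr rfl h1, Finset.sum_boole]
    have h2 : G.edgeFinset.filter (fun s => u ∈ s) = G.incidenceFinset u := by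
      ext s
      simp [SimpleGraph.mem_incidenceFinset, SimpleGraph.incidenceSet,
        SimpleGraph.mem_edgeFinset]

    simp [h2, SimpleGraph.card_incidenceFinset_eq_degree, Matrix.diagonal_apply_eq,
      SimpleGraph.adjMatrix_apply]
  · have h1 : ∀ s ∈ G.edgeFinset,
        (if u ∈ s then (1:ℝ) else 0) * (if v ∈ s then (1:ℝ) else 0)
          = if s = s(u, v) then (1:ℝ) else 0 := by
      intro s _
      have := Sym2.mem_and_mem_iff (z := s) huv
      split_ifs with h1 h2 h3 h3 <;> simp_all
    rw [Finset.sum_congr rfl h1, Finset.sum_ite_eq' G.edgeFinset (s(u,v)) (fun _ => (1:ℝ))]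
    simp [SimpleGraph.mem_edgeFinset, SimpleGraph.adjMatrix_apply,
      Matrix.diagonal_apply_ne _ huv]

@[simp] lemma totalGraph_adj_inl_inl (u v : V) :
    (totalGraph G).Adj (Sum.inl u) (Sum.inl v) ↔ G.Adj u v := Iff.rfl

@[simp] lemma totalGraph_adj_inl_inr (u : V) (e : G.edgeSet) :
    (totalGraph G).Adj (Sum.inl u) (Sum.inr e) ↔ u ∈ (e : Sym2 V) := Iff.rfl

@[simp] lemma totalGraph_adj_inr_inl (u : V) (e : G.edgeSet) :
    (totalGraph G).Adj (Sum.inr e) (Sum.inl u) ↔ u ∈ (e : Sym2 V) := Iff.rfl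

@[simp] lemma totalGraph_adj_inr_inr (e f : G.edgeSet) :
    (totalGraph G).Adj (Sum.inr e) (Sum.inr f) ↔
      e ≠ f ∧ ∃ v, v ∈ (e : Sym2 V) ∧ v ∈ (f : Sym2 V) := Iff.rfl

lemma count_common (e f : Sym2 V) (he : e ∈ G.edgeSet) (hf : f ∈ G.edgeSet) :
    ∑ u : V, (if u ∈ e then (1:ℝ) else 0) * (if u ∈ f then (1:ℝ) else 0)
      = if e = f then 2 else if (∃ u, u ∈ e ∧ u ∈ f) then 1 else 0 := by
  have h1 : ∀ u ∈ Finset.univ,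
      (if u ∈ e then (1:ℝ) else 0) * (if u ∈ f then (1:ℝ) else 0)
        = if u ∈ e ∧ u ∈ f then (1:ℝ) else 0 := by
    intro u _; split_ifs <;> simp_all
  rw [Finset.sum_congr rfl h1, Finset.sum_boole]
  by_cases hef : e = f
  · subst hef
    obtain ⟨a, b, hab⟩ : ∃ a b, e = s(a, b) := ⟨e.out.1, e.out.2, e.out_eq.symm⟩
    subst hab
    have hne : a ≠ b := (G.mem_edgeSet.1 he).ne
    have : Finset.univ.filter (fun u => u ∈ s(a,b) ∧ u ∈ s(a,b)) = {a, b} := by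
      ext u; simp [Sym2.mem_iff]
    rw [this, if_pos rfl, Finset.card_pair hne]; norm_num
  · rw [if_neg hef]
    by_cases hsh : ∃ u, u ∈ e ∧ u ∈ f
    · obtain ⟨w, hw, hw'⟩ := hsh
      have : Finset.univ.filter (fun u => u ∈ e ∧ u ∈ f) = {w} := by
        ext u
        simp only [Finset.mem_filter, Finset.mem_univ, true_and, Finset.mem_singleton]
        constructor
        · rintro ⟨hu, hu'⟩
          by_contra huw
          exact hef (((Sym2.mem_and_mem_iff huw).1 ⟨hu, hw⟩).trans
            ((Sym2.mem_and_mem_iff huw).1 ⟨hu', hw'⟩).symm)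
        · rintro rfl; exact ⟨hw, hw'⟩
      rw [this, if_pos ⟨w, hw, hw'⟩]
      simp
    · have : Finset.univ.filter (fun u => u ∈ e ∧ u ∈ f) = ∅ := by
        ext u
        simp only [Finset.mem_filter, Finset.mem_univ, true_and, Finset.notMem_empty,
          iff_false]
        exact fun h => hsh ⟨u, h.1, h.2⟩
      rw [this, if_neg hsh]
      simp

lemma adjT_eq :
    (totalGraph G).adjMatrix ℝ
      = fromBlocks (G.adjMatrix ℝ) (incMat G) (incMat G)ᵀ
          ((incMat G)ᵀ * incMat G - (2:ℝ) • 1) := by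
  ext i j
  rcases i with u | e <;> rcases j with v | f
  · by_cases h : G.Adj u v <;> simp [h, fromBlocks]
  · by_cases h : u ∈ (f : Sym2 V) <;> simp [h, fromBlocks]
  · by_cases h : v ∈ (e : Sym2 V) <;> simp [h, fromBlocks]
  · have hRR : ((incMat G)ᵀ * incMat G) e f
        = if (e : Sym2 V) = (f : Sym2 V) then 2
          else if (∃ u, u ∈ (e : Sym2 V) ∧ u ∈ (f : Sym2 V)) then 1 else 0 := by
      rw [Matrix.mul_apply]
      have : ∀ u ∈ Finset.univ, (incMat G)ᵀ e u * incMat G u f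
          = (if u ∈ (e : Sym2 V) then (1:ℝ) else 0) * (if u ∈ (f : Sym2 V) then (1:ℝ) else 0) := by
        intro u _; rw [Matrix.transpose_apply, incMat_apply, incMat_apply]
      rw [Finset.sum_congr rfl this, count_common G _ _ e.2 f.2]
    by_cases hef : e = f
    · subst hef
      simp [fromBlocks, hRR, Matrix.one_apply, Matrix.smul_apply]
    · have hef' : (e : Sym2 V) ≠ (f : Sym2 V) := fun h => hef (Subtype.ext h)
      by_cases hsh : ∃ u, u ∈ (e : Sym2 V) ∧ u ∈ (f : Sym2 V) <;>
        simp [fromBlocks, hRR, hef, hef', hsh, Matrix.one_apply, Matrix.smul_apply]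

lemma det_smul_one_sub (A : Matrix V V ℝ) (lam : V → ℝ)
    (hlam : A.charpoly.roots = Finset.univ.val.map lam) (y : ℝ) :
    det (y • (1 : Matrix V V ℝ) - A) = ∏ v, (y - lam v) := by
  have hcard : Multiset.card A.charpoly.roots = A.charpoly.natDegree := by
    rw [hlam, Matrix.charpoly_natDegree_eq_dim]; simp
  have hfac := Polynomial.C_leadingCoeff_mul_prod_multiset_X_sub_C (p := A.charpoly) hcard
  rw [(A.charpoly_monic).leadingCoeff, Polynomial.C_1, one_mul] at hfac
  rw [← eval_charpoly', ← hfac, hlam, Polynomial.eval_multiset_prod]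
  rw [Multiset.map_map, Multiset.map_map]
  rw [Finset.prod_eq_multiset_prod]
  congr 1
  apply Multiset.map_congr rfl
  intro v _
  simp

lemma abs_root_le {r : ℕ} (hreg : G.IsRegularOfDegree r) (μ : ℝ)
    (hμ : μ ∈ (G.adjMatrix ℝ).charpoly.roots) : |μ| ≤ r := by
  have hroot : ((G.adjMatrix ℝ).charpoly).IsRoot μ := (Polynomial.mem_roots'.1 hμ).2
  have hdet : det (μ • (1 : Matrix V V ℝ) - G.adjMatrix ℝ) = 0 := by
    rw [← eval_charpoly']; exact hroot
  obtain ⟨v, hv0, hv⟩ := Matrix.exists_mulVec_eq_zero_iff.2 hdet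
  cases isEmpty_or_nonempty V
  · exact absurd (funext fun i => (IsEmpty.elim ‹_› i : v i = 0)) hv0
  obtain ⟨k, -, hk⟩ := Finset.exists_max_image Finset.univ (fun i => |v i|) Finset.univ_nonempty
  have hvk : 0 < |v k| := by
    obtain ⟨i, hi⟩ := Function.ne_iff.1 hv0
    exact lt_of_lt_of_le (abs_pos.2 hi) (hk i (Finset.mem_univ i))
  have hAv : (G.adjMatrix ℝ *ᵥ v) k = μ * v k := by
    have := congrFun hv k
    simp only [Matrix.sub_mulVec, Matrix.smul_mulVec, Matrix.one_mulVec,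
      Pi.sub_apply, Pi.smul_apply, smul_eq_mul, Pi.zero_apply] at this
    linarith
  have key : |μ| * |v k| ≤ (r : ℝ) * |v k| := by
    rw [← abs_mul, ← hAv, SimpleGraph.adjMatrix_mulVec_apply]
    calc |∑ u ∈ G.neighborFinset k, v u| ≤ ∑ u ∈ G.neighborFinset k, |v u| :=
          Finset.abs_sum_le_sum_abs _ _
      _ ≤ ∑ _u ∈ G.neighborFinset k, |v k| :=
          Finset.sum_le_sum (fun u _ => hk u (Finset.mem_univ u))
      _ = (r : ℝ) * |v k| := by
          rw [Finset.sum_const, SimpleGraph.card_neighborFinset_eq_degree, hreg k,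
            nsmul_eq_mul]
  exact le_of_mul_le_mul_right key hvk

lemma fromBlocks_sub' {l m' : Type*} (A A' : Matrix l l ℝ) (B B' : Matrix l m' ℝ)
    (C C' : Matrix m' l ℝ) (D D' : Matrix m' m' ℝ) :
    fromBlocks A B C D - fromBlocks A' B' C' D'
      = fromBlocks (A - A') (B - B') (C - C') (D - D') := by
  rw [sub_eq_add_neg, Matrix.fromBlocks_neg, Matrix.fromBlocks_add]
  simp [sub_eq_add_neg]

lemma key_det {r : ℕ} (hreg : G.IsRegularOfDegree r) (lam : V → ℝ)
    (hlam : (G.adjMatrix ℝ).charpoly.roots = Finset.univ.val.map lam)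
    (hmn : Fintype.card V ≤ Fintype.card G.edgeSet)
    (hb : ∀ v, |lam v| ≤ r) (x : ℝ) (hx : (r : ℝ) < x) :
    det (x • (1 : Matrix (V ⊕ G.edgeSet) (V ⊕ G.edgeSet) ℝ) - (totalGraph G).adjMatrix ℝ)
      = (x + 2) ^ (Fintype.card G.edgeSet - Fintype.card V)
        * ∏ v, ((x - (lam v - 1 + r / 2 + Real.sqrt (lam v + 1 + (r : ℝ) ^ 2 / 4)))
          * (x - (lam v - 1 + r / 2 - Real.sqrt (lam v + 1 + (r : ℝ) ^ 2 / 4)))) := by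
  have hr0 : (0:ℝ) ≤ r := Nat.cast_nonneg r
  have hx0 : (0:ℝ) < x := lt_of_le_of_lt hr0 hx
  have hx2 : (0:ℝ) < x + 2 := by linarith
  have hx2ne : (x + 2) ≠ 0 := ne_of_gt hx2
  set A := G.adjMatrix ℝ with hA
  set R := incMat G with hRdef
  set N := x • (1 : Matrix V V ℝ) - A with hN
  have hdetN : N.det = ∏ v, (x - lam v) := det_smul_one_sub A lam hlam x
  have hNne : N.det ≠ 0 := by
    rw [hdetN]
    refine Finset.prod_ne_zero_iff.2 fun v _ => sub_ne_zero.2 ?_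
    have := (abs_le.1 (hb v)).2
    intro h; linarith [h.symm.le]
  have hNunit : IsUnit N.det := isUnit_iff_ne_zero.2 hNne
  haveI : Invertible N := N.invertibleOfIsUnitDet hNunit
  have hNinv : N * N⁻¹ = 1 := Matrix.mul_nonsing_inv N hNunit
  have hRRt : R * Rᵀ = A + (r:ℝ) • (1 : Matrix V V ℝ) := by
    rw [hRdef, hA, incMat_mul_transpose]
    congr 1
    ext i j
    by_cases h : i = j
    · subst h
      simp [hreg i, Matrix.one_apply_eq]
    · simp [Matrix.diagonal_apply_ne _ h, Matrix.one_apply_ne h]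
  -- block structure
  have hblock : x • (1 : Matrix (V ⊕ G.edgeSet) (V ⊕ G.edgeSet) ℝ) - (totalGraph G).adjMatrix ℝ
      = fromBlocks N (-R) (-Rᵀ) ((x+2) • 1 - Rᵀ * R) := by
    have e11 : x • (1 : Matrix V V ℝ) - SimpleGraph.adjMatrix ℝ G = N := by
      rw [hN, hA]
    have e12 : x • (0 : Matrix V G.edgeSet ℝ) - incMat G = -(incMat G) := by module
    have e21 : x • (0 : Matrix G.edgeSet V ℝ) - (incMat G)ᵀ = -(incMat G)ᵀ := by module
    have e22 : x • (1 : Matrix G.edgeSet G.edgeSet ℝ)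
        - ((incMat G)ᵀ * incMat G - (2:ℝ)•1)
        = (x+2) • 1 - (incMat G)ᵀ * incMat G := by module
    rw [adjT_eq, ← Matrix.fromBlocks_one, Matrix.fromBlocks_smul, fromBlocks_sub',
      e11, e12, e21, e22]

  set m := Fintype.card G.edgeSet
  set n := Fintype.card V
  set c : ℝ := (x + 2)⁻¹ with hc
  set K : Matrix V G.edgeSet ℝ := (1 + N⁻¹) * R with hK
  set W : Matrix V V ℝ := (1 + N⁻¹) * (A + (r:ℝ) • 1) with hW
  -- Schur complement step
  have step1 : det (x • (1 : Matrix (V ⊕ G.edgeSet) (V ⊕ G.edgeSet) ℝ)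
      - (totalGraph G).adjMatrix ℝ) = N.det * det ((x+2) • 1 - Rᵀ * K) := by
    rw [hblock, Matrix.det_fromBlocks₁₁]
    congr 2
    rw [invOf_eq_nonsing_inv]
    have e0 : (-Rᵀ) * N⁻¹ * (-R) = Rᵀ * N⁻¹ * R := by
      simp only [Matrix.neg_mul, Matrix.mul_neg, neg_neg]
    rw [e0, hK, Matrix.add_mul, Matrix.one_mul, Matrix.mul_add, ← Matrix.mul_assoc]
    abel
  -- Weinstein–Aronszajn step
  have step2 : det ((x+2) • (1 : Matrix G.edgeSet G.edgeSet ℝ) - Rᵀ * K)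
      = (x+2) ^ m * det (1 - c • (K * Rᵀ)) := by
    have e1 : (x+2) • (1 : Matrix G.edgeSet G.edgeSet ℝ) - Rᵀ * K
        = (x+2) • (1 + Rᵀ * (-(c • K))) := by
      rw [Matrix.mul_neg, Matrix.mul_smul, smul_add, smul_neg, smul_smul,
        mul_inv_cancel₀ hx2ne, one_smul]
      abel
    rw [e1, Matrix.det_smul, Matrix.det_one_add_mul_comm]
    congr 1
    rw [Matrix.neg_mul, Matrix.smul_mul, sub_eq_add_neg]
  have step3 : K * Rᵀ = W := by rw [hK, hW, Matrix.mul_assoc, hRRt]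
  have step4 : det ((x+2) • (1 : Matrix V V ℝ) - W) = (x+2)^n * det (1 - c • W) := by
    have e1 : (x+2) • (1 : Matrix V V ℝ) - W = (x+2) • (1 - c • W) := by
      rw [smul_sub, smul_smul, mul_inv_cancel₀ hx2ne, one_smul]
    rw [e1, Matrix.det_smul]
  set d : ℝ := Real.sqrt (4*x + (r:ℝ)^2 - 2*r + 9) with hddef
  have hd2 : d^2 = 4*x + (r:ℝ)^2 - 2*r + 9 := Real.sq_sqrt (by nlinarith)
  set al : ℝ := ((2*x + 3 - r) + d)/2 with hal
  set be : ℝ := ((2*x + 3 - r) - d)/2 with hbe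
  have hsum : al + be = 2*x + 3 - r := by rw [hal, hbe]; ring
  have hprod : al * be = x^2 + (2 - r)*x - r := by
    rw [hal, hbe]
    linear_combination (-(1:ℝ)/4) * hd2
  have step5 : N * ((x+2) • (1 : Matrix V V ℝ) - W) = (A - al•1) * (A - be•1) := by
    have e1 : N * ((x+2) • (1:Matrix V V ℝ) - W) = (x+2) • N - (N + 1) * (A + (r:ℝ)•1) := by
      rw [hW, Matrix.mul_sub, Matrix.mul_smul, Matrix.mul_one, ← Matrix.mul_assoc,
        Matrix.mul_add N 1 N⁻¹, Matrix.mul_one, hNinv]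
    have e2 : (A - al•1) * (A - be•1) = A*A - (al+be) • A + (al*be) • 1 := by
      simp only [Matrix.sub_mul, Matrix.mul_sub, smul_mul_assoc, mul_smul_comm,
        Matrix.one_mul, Matrix.mul_one, smul_smul, add_smul]
      module
    rw [e1, e2, hsum, hprod, hN]
    simp only [Matrix.sub_mul, Matrix.add_mul, Matrix.mul_add, smul_mul_assoc,
      mul_smul_comm, Matrix.one_mul, Matrix.mul_one, smul_smul, smul_sub, smul_add]
    module
  have hAy : ∀ y:ℝ, det (A - y•1) = ∏ v, (lam v - y) := by
    intro y
    have e1 : A - y•1 = -(y • (1:Matrix V V ℝ) - A) := by rw [neg_sub]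
    rw [e1, Matrix.det_neg, det_smul_one_sub A lam hlam y]
    rw [show ((-1:ℝ)^(Fintype.card V)) = ∏ _v : V, (-1:ℝ) by
      simp [Finset.prod_const, Finset.card_univ]]
    rw [← Finset.prod_mul_distrib]
    exact Finset.prod_congr rfl (fun v _ => by ring)
  have hquad : ∀ v, (lam v - al) * (lam v - be)
      = (x - (lam v - 1 + r/2 + Real.sqrt (lam v + 1 + (r:ℝ)^2/4)))
        * (x - (lam v - 1 + r/2 - Real.sqrt (lam v + 1 + (r:ℝ)^2/4))) := by
    intro v
    have hnn : (0:ℝ) ≤ lam v + 1 + (r:ℝ)^2/4 := by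
      nlinarith [(abs_le.1 (hb v)).1, sq_nonneg ((r:ℝ)/2 - 1)]
    have hu2 : (Real.sqrt (lam v + 1 + (r:ℝ)^2/4))^2 = lam v + 1 + (r:ℝ)^2/4 :=
      Real.sq_sqrt hnn
    rw [hal, hbe]
    linear_combination (-(1:ℝ)/4) * hd2 + hu2
  have step7 : N.det * det ((x+2) • (1:Matrix V V ℝ) - W)
      = ∏ v, ((x - (lam v - 1 + r/2 + Real.sqrt (lam v + 1 + (r:ℝ)^2/4)))
          * (x - (lam v - 1 + r/2 - Real.sqrt (lam v + 1 + (r:ℝ)^2/4)))) := by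
    rw [← Matrix.det_mul, step5, Matrix.det_mul, hAy al, hAy be, ← Finset.prod_mul_distrib]
    exact Finset.prod_congr rfl (fun v _ => hquad v)
  have hdet1c : det (1 - c • W) = ((x+2) • (1:Matrix V V ℝ) - W).det / (x+2)^n := by
    rw [step4]; field_simp
  rw [step1, step2, step3, hdet1c, ← step7, pow_sub₀ (x+2) hx2ne hmn]
  field_simp


theorem totalGraph_spectrum' (G : SimpleGraph V) (r : ℕ) (hr : 2 ≤ r)
    (hreg : G.IsRegularOfDegree r) (hconn : G.Connected)
    (lam : V → ℝ)
    (hlam : (G.adjMatrix ℝ).charpoly.roots = Finset.univ.val.map lam) :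
    ((totalGraph G).adjMatrix ℝ).charpoly.roots =
      Multiset.replicate (Fintype.card G.edgeSet - Fintype.card V) (-2 : ℝ)
        + Finset.univ.val.map
            (fun v => lam v - 1 + r / 2 + Real.sqrt (lam v + 1 + (r : ℝ) ^ 2 / 4))
        + Finset.univ.val.map
            (fun v => lam v - 1 + r / 2 - Real.sqrt (lam v + 1 + (r : ℝ) ^ 2 / 4)) := by
  have h2m : 2 * Fintype.card G.edgeSet = Fintype.card V * r := by
    have h1 := G.sum_degrees_eq_twice_card_edges
    simp only [hreg _] at h1
    rw [Finset.sum_const, smul_eq_mul, Finset.card_univ, SimpleGraph.edgeFinset_card] at h1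
    omega
  have hmn : Fintype.card V ≤ Fintype.card G.edgeSet := by
    have h2 := Nat.mul_le_mul_left (Fintype.card V) hr
    omega
  have hb : ∀ v, |lam v| ≤ r := fun v => abs_root_le G hreg (lam v)
    (by rw [hlam]; exact Multiset.mem_map_of_mem lam (Finset.mem_val.mpr (Finset.mem_univ v)))
  set rp : V → ℝ := fun v => lam v - 1 + r / 2 + Real.sqrt (lam v + 1 + (r : ℝ) ^ 2 / 4)
    with hrp
  set rm : V → ℝ := fun v => lam v - 1 + r / 2 - Real.sqrt (lam v + 1 + (r : ℝ) ^ 2 / 4)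
    with hrm
  have hQ1 : ((X - C (-2:ℝ))^(Fintype.card G.edgeSet - Fintype.card V)).Monic :=
    (monic_X_sub_C _).pow _
  have hQ2 : (∏ v, (X - C (rp v))).Monic :=
    monic_prod_of_monic _ _ (fun v _ => monic_X_sub_C _)
  have hQ3 : (∏ v, (X - C (rm v))).Monic :=
    monic_prod_of_monic _ _ (fun v _ => monic_X_sub_C _)
  have hPoly : ((totalGraph G).adjMatrix ℝ).charpoly
      = (X - C (-2:ℝ))^(Fintype.card G.edgeSet - Fintype.card V)
        * (∏ v, (X - C (rp v))) * (∏ v, (X - C (rm v))) := by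
    apply Polynomial.eq_of_infinite_eval_eq
    refine Set.Infinite.mono ?_ (Set.Ioi_infinite (r:ℝ))
    intro x hx
    simp only [Set.mem_setOf_eq]
    rw [eval_charpoly', key_det G hreg lam hlam hmn hb x hx]
    simp only [eval_mul, eval_pow, eval_sub, eval_X, eval_C, Polynomial.eval_prod]
    rw [sub_neg_eq_add, mul_assoc, ← Finset.prod_mul_distrib]
  rw [hPoly]
  rw [Polynomial.roots_mul (mul_ne_zero (mul_ne_zero hQ1.ne_zero hQ2.ne_zero) hQ3.ne_zero),
    Polynomial.roots_mul (mul_ne_zero hQ1.ne_zero hQ2.ne_zero),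
    Polynomial.roots_pow, Polynomial.roots_X_sub_C, Multiset.nsmul_singleton,
    Polynomial.roots_prod _ _ hQ2.ne_zero, Polynomial.roots_prod _ _ hQ3.ne_zero]
  simp only [Polynomial.roots_X_sub_C, Multiset.bind_singleton]


end aux

/-- **Cvetković.** Let `G` be a connected `r`-regular graph (`r ≥ 2`) with
`n` vertices, `m` edges, and adjacency eigenvalues `λ v` (`v ∈ V`, listed with
multiplicity as the roots of the characteristic polynomial).  Then the multiset of
eigenvalues of the adjacency matrix of `T(G)` is `{-2}` with multiplicity `m - n`
together with `λ v - 1 + r/2 ± √(λ v + 1 + r²/4)` for each `v`, one for each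
index–sign pair. -/
theorem totalGraph_spectrum {V : Type*} [Fintype V] [DecidableEq V]
    (G : SimpleGraph V) (r : ℕ) (hr : 2 ≤ r)
    (hreg : G.IsRegularOfDegree r) (hconn : G.Connected)
    (lam : V → ℝ)
    (hlam : (G.adjMatrix ℝ).charpoly.roots = Finset.univ.val.map lam) :
    ((totalGraph G).adjMatrix ℝ).charpoly.roots =
      Multiset.replicate (Fintype.card G.edgeSet - Fintype.card V) (-2 : ℝ)
        + Finset.univ.val.map
            (fun v => lam v - 1 + r / 2 + Real.sqrt (lam v + 1 + (r : ℝ) ^ 2 / 4))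
        + Finset.univ.val.map
            (fun v => lam v - 1 + r / 2 - Real.sqrt (lam v + 1 + (r : ℝ) ^ 2 / 4)) :=
  totalGraph_spectrum' G r hr hreg hconn lam hlam
end

section
/- For the complete bipartite graph K_{n,n} with parts {1,...,n} and {1',...,n'} and edge basis vectors |e_{i,j}⟩ (edge joining i and j'), the vectors w_{i,j} = sqrt(ij/(ij+i+j+1)) ∑_{k₂=1}^{j+1} ∑_{k₁=1}^{i+1} ((-i)^{δ(k₁,i+1)} (-j)^{δ(k₂,j+1)}/(ij)) |e_{k₁,k₂}⟩, for i,j ∈ {1,...,n-1}, form an orthonormal basis of the kernel of the incidence matrix of K_{n,n}. -/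
open Matrix
open scoped Classical

/-- The incidence matrix of `K_{n,n}` with parts `{1,…,n}` and `{1',…,n'}`, where the edge
joining `i` and `j'` is represented by the pair `(i, j) : Fin n × Fin n`. -/
def incKnn (n : ℕ) : Matrix (Fin n ⊕ Fin n) (Fin n × Fin n) ℝ := fun v e =>
  match v with
  | Sum.inl i => if i = e.1 then 1 else 0
  | Sum.inr j => if j = e.2 then 1 else 0

/-- The factor `(-I)^{δ(k,I+1)}` (with vertices `1, …, I+1` represented 0-based: value `1`
on indices `< I`, value `-I` on index `I`, and `0` beyond). -/
def kerFactor {n : ℕ} (I : ℕ) (a : Fin n) : ℝ :=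
  if (a : ℕ) < I then 1 else if (a : ℕ) = I then -(I : ℝ) else 0

/-- The vectors `w_{i,j} = √(h_{i,j}) ∑_{k₂=1}^{j+1} ∑_{k₁=1}^{i+1}
((-i)^{δ(k₁,i+1)} (-j)^{δ(k₂,j+1)} / (ij)) |e_{k₁,k₂}⟩` with
`h_{i,j} = ij/(ij+i+j+1)`, for `i, j ∈ {1, …, n-1}` (here `i, j : Fin (n-1)` with 1-based
values `i+1, j+1`). -/
noncomputable def wKnn {n : ℕ} (p : Fin (n - 1) × Fin (n - 1)) : Fin n × Fin n → ℝ :=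
  fun e =>
    let I : ℕ := (p.1 : ℕ) + 1
    let J : ℕ := (p.2 : ℕ) + 1
    Real.sqrt ((I * J : ℝ) / (I * J + I + J + 1)) *
      (kerFactor I e.1 * kerFactor J e.2 / ((I : ℝ) * J))

/-! ### Auxiliary lemmas -/

lemma sum_ind_lt {n I : ℕ} (hI : I ≤ n) :
    ∑ a : Fin n, (if (a : ℕ) < I then (1 : ℝ) else 0) = I := by
  rw [Fin.sum_univ_eq_sum_range (fun k => if k < I then (1 : ℝ) else 0) n,
    Finset.sum_boole]
  congr 1
  have : Finset.filter (fun x => x < I) (Finset.range n) = Finset.range I := by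
    ext k; simp [Finset.mem_range]; omega
  rw [this, Finset.card_range]

lemma sum_ind_eq {n I : ℕ} (hI : I < n) (c : ℝ) :
    ∑ a : Fin n, (if (a : ℕ) = I then c else 0) = c := by
  rw [Fin.sum_univ_eq_sum_range (fun k => if k = I then c else 0) n,
    Finset.sum_ite_eq' (Finset.range n) I (fun _ => c), if_pos (Finset.mem_range.mpr hI)]

lemma sum_kerFactor {n I : ℕ} (hI : I < n) : ∑ a : Fin n, kerFactor I a = 0 := by
  have h : ∀ a : Fin n, kerFactor I a
      = (if (a : ℕ) < I then (1 : ℝ) else 0) + (if (a : ℕ) = I then -(I : ℝ) else 0) := by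
    intro a
    unfold kerFactor
    split_ifs with h1 h2 <;> first | ring1 | (exfalso; omega)
  rw [Finset.sum_congr rfl (fun a _ => h a), Finset.sum_add_distrib,
    sum_ind_lt hI.le, sum_ind_eq hI]
  ring

lemma sum_kerFactor_mul {n I I' : ℕ} (hI : I < n) (hI' : I' < n) :
    ∑ a : Fin n, kerFactor I a * kerFactor I' a
      = if I = I' then (I : ℝ) * ((I : ℝ) + 1) else 0 := by
  rcases lt_trichotomy I I' with h | h | h
  · rw [if_neg h.ne]
    have hpt : ∀ a : Fin n, kerFactor I a * kerFactor I' a = kerFactor I a := by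
      intro a
      unfold kerFactor
      split_ifs <;> first | ring1 | (exfalso; omega)
    rw [Finset.sum_congr rfl (fun a _ => hpt a), sum_kerFactor hI]
  · subst h
    rw [if_pos rfl]
    have hpt : ∀ a : Fin n, kerFactor I a * kerFactor I a
        = (if (a : ℕ) < I then (1 : ℝ) else 0)
          + (if (a : ℕ) = I then (I : ℝ) * (I : ℝ) else 0) := by
      intro a
      unfold kerFactor
      split_ifs <;> first | ring1 | (exfalso; omega)
    rw [Finset.sum_congr rfl (fun a _ => hpt a), Finset.sum_add_distrib,
      sum_ind_lt hI.le, sum_ind_eq hI]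
    ring
  · rw [if_neg h.ne']
    have hpt : ∀ a : Fin n, kerFactor I a * kerFactor I' a = kerFactor I' a := by
      intro a
      unfold kerFactor
      split_ifs <;> first | ring1 | (exfalso; omega)
    rw [Finset.sum_congr rfl (fun a _ => hpt a), sum_kerFactor hI']

/-- The normalization constant. -/
noncomputable def wc (i j : ℕ) : ℝ :=
  Real.sqrt ((i * j : ℝ) / ((i : ℝ) * j + i + j + 1)) / ((i : ℝ) * j)

lemma wKnn_apply {n : ℕ} (p : Fin (n - 1) × Fin (n - 1)) (e : Fin n × Fin n) :
    wKnn (n := n) p e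
      = wc ((p.1 : ℕ) + 1) ((p.2 : ℕ) + 1)
        * (kerFactor ((p.1 : ℕ) + 1) e.1 * kerFactor ((p.2 : ℕ) + 1) e.2) := by
  simp only [wKnn, wc]
  push_cast
  ring

lemma wc_sq {i j : ℕ} (hi : 0 < i) (hj : 0 < j) :
    wc i j * wc i j * ((i : ℝ) * ((i : ℝ) + 1) * ((j : ℝ) * ((j : ℝ) + 1))) = 1 := by
  have hi' : (0 : ℝ) < i := by exact_mod_cast hi
  have hj' : (0 : ℝ) < j := by exact_mod_cast hj
  have hden : (0 : ℝ) < (i : ℝ) * j + i + j + 1 := by positivity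
  unfold wc
  rw [div_mul_div_comm, Real.mul_self_sqrt (by positivity)]
  field_simp
  ring

lemma wKnn_dot {n : ℕ} (p q : Fin (n - 1) × Fin (n - 1)) :
    wKnn (n := n) p ⬝ᵥ wKnn (n := n) q = if p = q then 1 else 0 := by
  have hp1 := p.1.isLt; have hp2 := p.2.isLt
  have hq1 := q.1.isLt; have hq2 := q.2.isLt
  have hI : (p.1 : ℕ) + 1 < n := by omega
  have hJ : (p.2 : ℕ) + 1 < n := by omega
  have hI' : (q.1 : ℕ) + 1 < n := by omega
  have hJ' : (q.2 : ℕ) + 1 < n := by omega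
  unfold dotProduct
  rw [Fintype.sum_prod_type]
  have factored : ∑ a : Fin n, ∑ b : Fin n, wKnn (n := n) p (a, b) * wKnn (n := n) q (a, b)
      = (wc ((p.1 : ℕ) + 1) ((p.2 : ℕ) + 1) * wc ((q.1 : ℕ) + 1) ((q.2 : ℕ) + 1))
        * ((∑ a : Fin n, kerFactor ((p.1 : ℕ) + 1) a * kerFactor ((q.1 : ℕ) + 1) a)
          * (∑ b : Fin n, kerFactor ((p.2 : ℕ) + 1) b * kerFactor ((q.2 : ℕ) + 1) b)) := by
    symm
    rw [Finset.sum_mul_sum, Finset.mul_sum]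
    refine Finset.sum_congr rfl fun a _ => ?_
    rw [Finset.mul_sum]
    refine Finset.sum_congr rfl fun b _ => ?_
    rw [wKnn_apply p (a, b), wKnn_apply q (a, b)]
    ring
  rw [factored, sum_kerFactor_mul hI hI', sum_kerFactor_mul hJ hJ']
  by_cases hpq : p = q
  · subst hpq
    rw [if_pos rfl, if_pos rfl, if_pos rfl]
    have := wc_sq (i := (p.1 : ℕ) + 1) (j := (p.2 : ℕ) + 1) (by omega) (by omega)
    push_cast at this ⊢
    linear_combination this
  · rw [if_neg hpq]
    have : ¬((p.1 : ℕ) + 1 = (q.1 : ℕ) + 1) ∨ ¬((p.2 : ℕ) + 1 = (q.2 : ℕ) + 1) := by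
      by_contra hc
      push_neg at hc
      exact hpq (Prod.ext (Fin.val_injective (by omega)) (Fin.val_injective (by omega)))
    rcases this with h | h
    · rw [if_neg h]; ring
    · rw [if_neg h]; ring

lemma wKnn_ker {n : ℕ} (p : Fin (n - 1) × Fin (n - 1)) :
    incKnn n *ᵥ wKnn (n := n) p = 0 := by
  have hp1 := p.1.isLt; have hp2 := p.2.isLt
  have hI : (p.1 : ℕ) + 1 < n := by omega
  have hJ : (p.2 : ℕ) + 1 < n := by omega
  funext v
  cases v with
  | inl i =>
    show ∑ e : Fin n × Fin n, incKnn n (Sum.inl i) e * wKnn (n := n) p e = 0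
    rw [Fintype.sum_prod_type]
    simp only [incKnn, wKnn_apply, ite_mul, one_mul, zero_mul]
    have : ∀ a : Fin n, ∑ b : Fin n,
        (if i = a then wc ((p.1 : ℕ) + 1) ((p.2 : ℕ) + 1)
          * (kerFactor ((p.1 : ℕ) + 1) a * kerFactor ((p.2 : ℕ) + 1) b) else 0)
        = if i = a then (wc ((p.1 : ℕ) + 1) ((p.2 : ℕ) + 1) * kerFactor ((p.1 : ℕ) + 1) a)
            * ∑ b : Fin n, kerFactor ((p.2 : ℕ) + 1) b else 0 := by
      intro a
      split_ifs with h
      · rw [Finset.mul_sum]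
        exact Finset.sum_congr rfl fun b _ => by ring
      · simp
    rw [Finset.sum_congr rfl fun a _ => this a, sum_kerFactor hJ]
    simp
  | inr j =>
    show ∑ e : Fin n × Fin n, incKnn n (Sum.inr j) e * wKnn (n := n) p e = 0
    rw [Fintype.sum_prod_type]
    simp only [incKnn, wKnn_apply, ite_mul, one_mul, zero_mul]
    have : ∀ a : Fin n, ∑ b : Fin n,
        (if j = b then wc ((p.1 : ℕ) + 1) ((p.2 : ℕ) + 1)
          * (kerFactor ((p.1 : ℕ) + 1) a * kerFactor ((p.2 : ℕ) + 1) b) else 0)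
        = wc ((p.1 : ℕ) + 1) ((p.2 : ℕ) + 1)
            * (kerFactor ((p.1 : ℕ) + 1) a * kerFactor ((p.2 : ℕ) + 1) j) := by
      intro a
      rw [Finset.sum_ite_eq, if_pos (Finset.mem_univ j)]
    rw [Finset.sum_congr rfl fun a _ => this a]
    have : ∀ a : Fin n, wc ((p.1 : ℕ) + 1) ((p.2 : ℕ) + 1)
        * (kerFactor ((p.1 : ℕ) + 1) a * kerFactor ((p.2 : ℕ) + 1) j)
        = kerFactor ((p.1 : ℕ) + 1) a
          * (wc ((p.1 : ℕ) + 1) ((p.2 : ℕ) + 1) * kerFactor ((p.2 : ℕ) + 1) j) := by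
      intro a; ring
    rw [Finset.sum_congr rfl fun a _ => this a, ← Finset.sum_mul, sum_kerFactor hI, zero_mul]

lemma wKnn_li {n : ℕ} : LinearIndependent ℝ (wKnn (n := n)) := by
  rw [Fintype.linearIndependent_iff]
  intro c hc q
  have expand : (∑ p, c p • wKnn (n := n) p) ⬝ᵥ wKnn (n := n) q
      = ∑ p, c p * (wKnn (n := n) p ⬝ᵥ wKnn (n := n) q) := by
    unfold dotProduct
    simp only [Finset.sum_apply, Pi.smul_apply, smul_eq_mul, Finset.sum_mul]
    rw [Finset.sum_comm]
    refine Finset.sum_congr rfl fun p _ => ?_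
    rw [Finset.mul_sum]
    exact Finset.sum_congr rfl fun e _ => by ring
  rw [hc, zero_dotProduct] at expand
  simp only [wKnn_dot, mul_ite, mul_one, mul_zero, Finset.sum_ite_eq',
    Finset.mem_univ, if_true] at expand
  exact expand.symm

/-! ### A spanning set for the kernel -/

def uvec {m : ℕ} (a : Fin m) : Fin (m + 1) → ℝ := fun x =>
  (if x = a.castSucc then 1 else 0) - (if x = Fin.last m then 1 else 0)

lemma sum_mul_uvec {m : ℕ} (r : Fin (m + 1) → ℝ) (hr : ∑ c, r c = 0) (z : Fin (m + 1)) :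
    ∑ b : Fin m, r b.castSucc * uvec b z = r z := by
  have hsum : ∑ b : Fin m, r b.castSucc = -r (Fin.last m) := by
    rw [Fin.sum_univ_castSucc] at hr
    linarith
  simp only [uvec, mul_sub]
  rw [Finset.sum_sub_distrib]
  induction z using Fin.lastCases with
  | last =>
    rw [show (∑ b : Fin m, r b.castSucc * (if Fin.last m = b.castSucc then (1:ℝ) else 0)) = 0
        from Finset.sum_eq_zero fun b _ => by
          rw [if_neg (Fin.castSucc_lt_last b).ne', mul_zero]]
    rw [show (∑ b : Fin m, r b.castSucc * (if Fin.last m = Fin.last m then (1:ℝ) else 0))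
        = ∑ b : Fin m, r b.castSucc
        from Finset.sum_congr rfl fun b _ => by rw [if_pos rfl, mul_one]]
    rw [hsum]
    ring
  | cast c =>
    have h1 : ∀ b : Fin m, r b.castSucc * (if c.castSucc = b.castSucc then (1:ℝ) else 0)
        = if c = b then r b.castSucc else 0 := by
      intro b
      by_cases h : c = b
      · subst h; rw [if_pos rfl, if_pos rfl, mul_one]
      · rw [if_neg (fun hh => h (Fin.castSucc_inj.mp hh)), if_neg h, mul_zero]
    rw [Finset.sum_congr rfl fun b _ => h1 b, Finset.sum_ite_eq _ c _,
      if_pos (Finset.mem_univ c)]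
    rw [show (∑ b : Fin m, r b.castSucc * (if c.castSucc = Fin.last m then (1:ℝ) else 0)) = 0
        from Finset.sum_eq_zero fun b _ => by
          rw [if_neg (Fin.castSucc_lt_last c).ne, mul_zero]]
    ring

lemma row_of_ker {n : ℕ} (y : Fin n × Fin n → ℝ) (hy : incKnn n *ᵥ y = 0) (i : Fin n) :
    ∑ b, y (i, b) = 0 := by
  have h := congrFun hy (Sum.inl i)
  simp only [Matrix.mulVec, dotProduct, incKnn, Pi.zero_apply] at h
  rw [Fintype.sum_prod_type] at h
  simp only [ite_mul, one_mul, zero_mul] at h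
  have : ∀ a : Fin n, ∑ b : Fin n, (if i = a then y (a, b) else 0)
      = if i = a then ∑ b : Fin n, y (a, b) else 0 := by
    intro a; split_ifs <;> simp
  rw [Finset.sum_congr rfl fun a _ => this a, Finset.sum_ite_eq,
    if_pos (Finset.mem_univ i)] at h
  exact h

lemma col_of_ker {n : ℕ} (y : Fin n × Fin n → ℝ) (hy : incKnn n *ᵥ y = 0) (j : Fin n) :
    ∑ a, y (a, j) = 0 := by
  have h := congrFun hy (Sum.inr j)
  simp only [Matrix.mulVec, dotProduct, incKnn, Pi.zero_apply] at h
  rw [Fintype.sum_prod_type] at h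
  simp only [ite_mul, one_mul, zero_mul] at h
  have : ∀ a : Fin n, ∑ b : Fin n, (if j = b then y (a, b) else 0) = y (a, j) := by
    intro a; rw [Finset.sum_ite_eq, if_pos (Finset.mem_univ j)]
  rw [Finset.sum_congr rfl fun a _ => this a] at h
  exact h

lemma ker_eq_sum_uvec {m : ℕ} (y : Fin (m + 1) × Fin (m + 1) → ℝ)
    (hrow : ∀ i, ∑ b, y (i, b) = 0) (hcol : ∀ j, ∑ a, y (a, j) = 0) :
    y = ∑ p : Fin m × Fin m, y (p.1.castSucc, p.2.castSucc)
        • (fun e : Fin (m + 1) × Fin (m + 1) => uvec p.1 e.1 * uvec p.2 e.2) := by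
  funext e
  obtain ⟨x, z⟩ := e
  rw [Finset.sum_apply]
  simp only [Pi.smul_apply, smul_eq_mul]
  rw [Fintype.sum_prod_type]
  have hinner : ∀ a : Fin m,
      ∑ b : Fin m, y (a.castSucc, b.castSucc) * (uvec a x * uvec b z)
      = y (a.castSucc, z) * uvec a x := by
    intro a
    have h := sum_mul_uvec (fun c => y (a.castSucc, c)) (hrow a.castSucc) z
    calc ∑ b : Fin m, y (a.castSucc, b.castSucc) * (uvec a x * uvec b z)
        = (∑ b : Fin m, y (a.castSucc, b.castSucc) * uvec b z) * uvec a x := by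
          rw [Finset.sum_mul]
          exact Finset.sum_congr rfl fun b _ => by ring
      _ = y (a.castSucc, z) * uvec a x := by rw [h]
  rw [Finset.sum_congr rfl fun a _ => hinner a]
  exact (sum_mul_uvec (fun c => y (c, z)) (hcol z) x).symm

/-- The vectors `w_{i,j}`, `i, j ∈ {1, …, n-1}`, form an orthonormal
basis of the kernel of the incidence matrix of `K_{n,n}`: they are orthonormal, each lies
in the kernel, and they span the kernel. -/
theorem wKnn_orthonormal_basis_kernel (n : ℕ) :
    (∀ p q : Fin (n - 1) × Fin (n - 1),
        wKnn (n := n) p ⬝ᵥ wKnn (n := n) q = if p = q then 1 else 0) ∧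
    (∀ p : Fin (n - 1) × Fin (n - 1), incKnn n *ᵥ wKnn p = 0) ∧
    (∀ y : Fin n × Fin n → ℝ, incKnn n *ᵥ y = 0 →
        y ∈ Submodule.span ℝ (Set.range (wKnn (n := n)))) := by
  refine ⟨wKnn_dot, wKnn_ker, ?_⟩
  intro y hy
  match n, y, hy with
  | 0, y, hy =>
    have : y = 0 := funext fun e => e.1.elim0
    rw [this]
    exact Submodule.zero_mem _
  | (m + 1), y, hy =>
    set g : Fin m × Fin m → (Fin (m + 1) × Fin (m + 1) → ℝ) :=
      fun p => fun e => uvec p.1 e.1 * uvec p.2 e.2 with hg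
    have hKg : ∀ z : Fin (m + 1) × Fin (m + 1) → ℝ, incKnn (m + 1) *ᵥ z = 0 →
        z ∈ Submodule.span ℝ (Set.range g) := by
      intro z hz
      rw [ker_eq_sum_uvec z (row_of_ker z hz) (col_of_ker z hz)]
      exact Submodule.sum_mem _ fun p _ =>
        Submodule.smul_mem _ _ (Submodule.subset_span ⟨p, rfl⟩)
    have hsub : Submodule.span ℝ (Set.range (wKnn (n := m + 1)))
        ≤ Submodule.span ℝ (Set.range g) := by
      rw [Submodule.span_le]
      rintro _ ⟨p, rfl⟩
      exact hKg _ (wKnn_ker p)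
    have heq : Submodule.span ℝ (Set.range (wKnn (n := m + 1)))
        = Submodule.span ℝ (Set.range g) := by
      apply Submodule.eq_of_le_of_finrank_le hsub
      have h1 : Module.finrank ℝ (Submodule.span ℝ (Set.range (wKnn (n := m + 1))))
          = Fintype.card (Fin (m + 1 - 1) × Fin (m + 1 - 1)) :=
        finrank_span_eq_card (wKnn_li (n := m + 1))
      have h2 : Module.finrank ℝ (Submodule.span ℝ (Set.range g))
          ≤ Fintype.card (Fin m × Fin m) := finrank_range_le_card g
      rw [h1]
      simp only [Fintype.card_prod, Fintype.card_fin, Nat.add_sub_cancel] at h2 ⊢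
      exact h2
    rw [heq]
    exact hKg y hy
end
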